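/- Consider a network whose conflict graph G is a path on n ≥ 2 vertices (node i adjacent to node i+1, i.e., interference range β = 1). Let θ_1,...,θ_n be positive reals with θ_i + θ_{i+1} < 1 for all 1 ≤ i ≤ n−1. If the back-off rates are set to ν_i = θ_i · (∏_{j=max(i,2)}^{min(i+1,n)−1} (1−θ_j)) / (∏_{j=max(i,2)}^{min(i+1,n)} (1−θ_{j−1}−θ_j)), then in the hard-core model π(z) ∝ ∏_i ν_i^{z_i} on independent sets of the path, the marginal probability that node i is active equals θ_i for every i. -/

import Mathlib

open scoped Classical
open Finset

/-- Weight of a 0-1 configuration `z` with back-off rates `ν`. -/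
noncomputable def hcWeight {n : ℕ} (ν : Fin n → ℝ) (z : Fin n → Bool) : ℝ :=
  ∏ i, if z i then ν i else 1

/-- `z` is an independent-set indicator vector for adjacency `A`. -/
def hcIndep {n : ℕ} (A : Fin n → Fin n → Prop) (z : Fin n → Bool) : Prop :=
  ∀ i j, A i j → ¬(z i = true ∧ z j = true)

/-- Normalizing constant of the hard-core model. -/
noncomputable def hcZ (n : ℕ) (A : Fin n → Fin n → Prop) (ν : Fin n → ℝ) : ℝ :=
  ∑ z : Fin n → Bool, if hcIndep A z then hcWeight ν z else 0

/-- Marginal activity probability of node `i` in the hard-core model. -/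
noncomputable def hcMarginal (n : ℕ) (A : Fin n → Fin n → Prop) (ν : Fin n → ℝ)
    (i : Fin n) : ℝ :=
  (∑ z : Fin n → Bool, if hcIndep A z ∧ z i = true then hcWeight ν z else 0) / hcZ n A ν

/-- line network with interference range β = 1 (a path on n ≥ 2 vertices,
1-based vertices i = 1,…,n, vertex i corresponding to `k : Fin n` with `k.val + 1 = i`).
With the stated back-off rates, every marginal matches its target throughput. -/
noncomputable def hcKer (θ : ℕ → ℝ) (s : ℕ) (a b : Bool) : ℝ :=
  if a then (if b then 0 else 1)
  else (if b then θ s / (1 - θ (s - 1)) else (1 - θ (s - 1) - θ s) / (1 - θ (s - 1)))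

def hcPrev {m : ℕ} (z : Fin m → Bool) (i : Fin m) : Bool :=
  if h : i.val = 0 then false else z ⟨i.val - 1, lt_of_le_of_lt (Nat.sub_le _ _) i.isLt⟩

noncomputable def hcW (θ : ℕ → ℝ) {m : ℕ} (z : Fin m → Bool) : ℝ :=
  ∏ i, hcKer θ (i.val + 1) (hcPrev z i) (z i)

lemma hcPrev_snoc_castSucc {m : ℕ} (z : Fin (m+1) → Bool) (b : Bool) (i : Fin (m+1)) :
    hcPrev (Fin.snoc z b) i.castSucc = hcPrev z i := by
  unfold hcPrev
  rcases Nat.eq_zero_or_pos i.val with h | h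
  · rw [dif_pos (by simpa using h), dif_pos h]
  · rw [dif_neg (by simp only [Fin.coe_castSucc]; omega), dif_neg (by omega)]
    have : (⟨(i.castSucc).val - 1, lt_of_le_of_lt (Nat.sub_le _ _) (i.castSucc).isLt⟩ : Fin (m+2))
        = Fin.castSucc ⟨i.val - 1, lt_of_le_of_lt (Nat.sub_le _ _) i.isLt⟩ := by
      apply Fin.ext; simp
    rw [this, Fin.snoc_castSucc]

lemma hcPrev_snoc_last {m : ℕ} (z : Fin (m+1) → Bool) (b : Bool) :
    hcPrev (Fin.snoc z b) (Fin.last (m+1)) = z (Fin.last m) := by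
  unfold hcPrev
  rw [dif_neg (by simp)]
  have : (⟨(Fin.last (m+1)).val - 1, lt_of_le_of_lt (Nat.sub_le _ _) (Fin.last (m+1)).isLt⟩ : Fin (m+2))
      = Fin.castSucc (Fin.last m) := by apply Fin.ext; simp
  rw [this, Fin.snoc_castSucc]

lemma hcW_snoc (θ : ℕ → ℝ) {m : ℕ} (z : Fin (m+1) → Bool) (b : Bool) :
    hcW θ (Fin.snoc z b) = hcW θ z * hcKer θ (m + 2) (z (Fin.last m)) b := by
  unfold hcW
  rw [Fin.prod_univ_castSucc]
  congr 1
  · exact Finset.prod_congr rfl fun i _ => by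
      rw [hcPrev_snoc_castSucc, Fin.snoc_castSucc, Fin.coe_castSucc]
  · rw [hcPrev_snoc_last, Fin.snoc_last, Fin.val_last]

lemma sum_snoc {m : ℕ} (f : (Fin (m+1) → Bool) → ℝ) :
    ∑ z : Fin (m+1) → Bool, f z = ∑ z : Fin m → Bool, ∑ b : Bool, f (Fin.snoc z b) := by
  have h1 : ∑ p : (Fin m → Bool) × Bool, f (Fin.snoc p.1 p.2)
      = ∑ z : Fin m → Bool, ∑ b : Bool, f (Fin.snoc z b) :=
    Fintype.sum_prod_type (fun p => f (Fin.snoc p.1 p.2))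
  rw [← h1]
  exact (Fintype.sum_bijective
    (fun p : (Fin m → Bool) × Bool => (Fin.snoc p.1 p.2 : Fin (m+1) → Bool))
    (((Equiv.prodComm _ _).trans (Fin.snocEquiv fun _ => Bool)).bijective)
    _ f (fun p => by simp [Fin.snocEquiv])).symm

lemma hcKer_rowsum (θ : ℕ → ℝ) {s : ℕ} (hs : 1 - θ (s-1) ≠ 0) (a : Bool) :
    hcKer θ s a true + hcKer θ s a false = 1 := by
  cases a <;> simp [hcKer] <;> field_simp <;> ring

lemma sum_last (θ : ℕ → ℝ) (n : ℕ) (h0 : θ 0 = 0) (h1 : ∀ s, s ≤ n → θ s < 1) :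
    ∀ m, m + 1 ≤ n → ∀ b : Bool,
      (∑ z : Fin (m+1) → Bool, if z (Fin.last m) = b then hcW θ z else 0)
        = (if b then θ (m+1) else 1 - θ (m+1)) := by
  intro m
  induction m with
  | zero =>
    intro _ b
    rw [sum_snoc]
    have hw : ∀ (z : Fin 0 → Bool) (c : Bool),
        (if (Fin.snoc z c : Fin (0+1) → Bool) (Fin.last 0) = b
            then hcW θ (Fin.snoc z c) else 0)
          = (if c = b then hcKer θ 1 false c else 0) := by
      intro z c
      rw [Fin.snoc_last]
      by_cases hc : c = b
      · rw [if_pos hc, if_pos hc]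
        unfold hcW
        rw [Fin.prod_univ_one]
        rw [show (0 : Fin (0+1)) = Fin.last 0 from by ext; simp]
        rw [show hcPrev (Fin.snoc z c : Fin (0+1) → Bool) (Fin.last 0) = false from dif_pos rfl]
        rw [Fin.snoc_last, Fin.val_last]
      · rw [if_neg hc, if_neg hc]
    rw [Finset.sum_congr rfl (fun z _ => Finset.sum_congr rfl (fun c _ => hw z c))]
    rw [Finset.sum_const, Fintype.sum_bool]
    have hcard : (Finset.univ : Finset (Fin 0 → Bool)).card = 1 := by simp
    rw [hcard, one_smul]
    cases b <;> simp [hcKer, h0]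
  | succ m ih =>
    intro hm b
    rw [sum_snoc]
    have step : ∀ z : Fin (m+1) → Bool,
        (∑ b' : Bool, if (Fin.snoc z b' : Fin (m+2) → Bool) (Fin.last (m+1)) = b
            then hcW θ (Fin.snoc z b') else 0)
          = hcW θ z * hcKer θ (m+2) (z (Fin.last m)) b := by
      intro z
      simp only [Fin.snoc_last]
      rw [Fintype.sum_eq_single b (fun c hc => by rw [if_neg hc]), if_pos rfl, hcW_snoc]
    rw [Finset.sum_congr rfl (fun z _ => step z)]
    have split : ∀ z : Fin (m+1) → Bool,
        hcW θ z * hcKer θ (m+2) (z (Fin.last m)) b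
          = (if z (Fin.last m) = true then hcW θ z else 0) * hcKer θ (m+2) true b
            + (if z (Fin.last m) = false then hcW θ z else 0) * hcKer θ (m+2) false b := by
      intro z
      cases hzl : z (Fin.last m) <;> simp
    rw [Finset.sum_congr rfl (fun z _ => split z), Finset.sum_add_distrib,
      ← Finset.sum_mul, ← Finset.sum_mul, ih (by omega) true, ih (by omega) false]
    have hne : (1 : ℝ) - θ (m+1) ≠ 0 := by
      have := h1 (m+1) (by omega); intro h; nlinarith
    have e1 : (m + 2) - 1 = m + 1 := rfl
    cases b <;> simp only [hcKer, if_true, if_false, Bool.false_eq_true, e1] <;> field_simp <;> ring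

lemma sum_total (θ : ℕ → ℝ) (n : ℕ) (h0 : θ 0 = 0) (h1 : ∀ s, s ≤ n → θ s < 1)
    (m : ℕ) (hm1 : 1 ≤ m) (hmn : m ≤ n) :
    ∑ z : Fin m → Bool, hcW θ z = 1 := by
  obtain ⟨m', rfl⟩ : ∃ m'', m = m'' + 1 := ⟨m - 1, by omega⟩
  have split : ∀ z : Fin (m'+1) → Bool,
      hcW θ z = (if z (Fin.last m') = true then hcW θ z else 0)
        + (if z (Fin.last m') = false then hcW θ z else 0) := by
    intro z; cases hz : z (Fin.last m') <;> simp
  rw [Finset.sum_congr rfl (fun z _ => split z), Finset.sum_add_distrib,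
    sum_last θ n h0 h1 m' hmn true, sum_last θ n h0 h1 m' hmn false]
  simp

lemma sum_marg (θ : ℕ → ℝ) (n : ℕ) (h0 : θ 0 = 0) (h1 : ∀ s, s ≤ n → θ s < 1)
    (k : ℕ) :
    ∀ m, k + 1 ≤ m → ∀ (hk : k < m), m ≤ n →
      (∑ z : Fin m → Bool, if z ⟨k, hk⟩ = true then hcW θ z else 0) = θ (k+1) := by
  intro m hm
  induction m, hm using Nat.le_induction with
  | base =>
    intro hk hn
    have e : (⟨k, hk⟩ : Fin (k+1)) = Fin.last k := rfl
    rw [e, sum_last θ n h0 h1 k hn true, if_pos rfl]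
  | succ m hm ih =>
    intro hk hn
    obtain ⟨m', rfl⟩ : ∃ m'', m = m'' + 1 := ⟨m - 1, by omega⟩
    rw [sum_snoc]
    have km : k < m' + 1 := by omega
    have e : (⟨k, hk⟩ : Fin (m'+1+1)) = Fin.castSucc ⟨k, km⟩ := rfl
    have inner : ∀ z : Fin (m'+1) → Bool,
        (∑ b : Bool, if (Fin.snoc z b : Fin (m'+1+1) → Bool) ⟨k, hk⟩ = true
            then hcW θ (Fin.snoc z b) else 0)
          = (if z ⟨k, km⟩ = true then hcW θ z else 0) := by
      intro z
      simp only [e, Fin.snoc_castSucc]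
      rw [Fintype.sum_bool, hcW_snoc, hcW_snoc]
      by_cases hc : z ⟨k, km⟩ = true
      · rw [if_pos hc, if_pos hc, if_pos hc, ← mul_add]
        have hne : 1 - θ ((m'+2) - 1) ≠ 0 := by
          have := h1 (m'+1) (by omega)
          show (1:ℝ) - θ (m'+1) ≠ 0
          intro h; nlinarith
        rw [hcKer_rowsum θ hne, mul_one]
      · rw [if_neg hc, if_neg hc, if_neg hc, add_zero]
    rw [Finset.sum_congr rfl (fun z _ => inner z)]
    exact ih km (by omega)

noncomputable def hcA (θ : ℕ → ℝ) (s : ℕ) : ℝ := θ s / (1 - θ (s-1) - θ s)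
noncomputable def hcB (θ : ℕ → ℝ) (s : ℕ) : ℝ := (1 - θ (s-1)) / (1 - θ (s-1) - θ s)
noncomputable def hcD (θ : ℕ → ℝ) (s : ℕ) : ℝ := (1 - θ (s-1) - θ s) / (1 - θ (s-1))
noncomputable def hcNu (θ : ℕ → ℝ) (n s : ℕ) : ℝ := hcA θ s * (if s < n then hcB θ (s+1) else 1)

lemma hcKer_eq (θ : ℕ → ℝ) (n s : ℕ) (hs1 : 1 ≤ s) (hsn : s ≤ n)
    (hA : ∀ t, 1 ≤ t → t ≤ n → 1 - θ (t-1) ≠ 0)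
    (hB : ∀ t, 1 ≤ t → t ≤ n → 1 - θ (t-1) - θ t ≠ 0)
    (a b : Bool) (hab : ¬(a = true ∧ b = true)) :
    hcKer θ s a b * (if b = true ∧ s < n then hcB θ (s+1) else 1)
      = hcD θ s * (if b = true then hcNu θ n s else 1) * (if a = true then hcB θ s else 1) := by
  have h1 := hA s hs1 hsn
  have h2 := hB s hs1 hsn
  cases a
  · cases b
    · simp [hcKer, hcD]
    · have key : hcD θ s * hcA θ s = θ s / (1 - θ (s-1)) := by
        unfold hcD hcA; field_simp
      simp only [hcKer, hcNu, if_true, if_false, Bool.false_eq_true, true_and, mul_one,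
        ← mul_assoc, key]
  · cases b
    · have key : hcD θ s * hcB θ s = 1 := by
        unfold hcD hcB; field_simp
      simp only [hcKer, if_true, if_false, Bool.false_eq_true, false_and, mul_one, one_mul, key]
    · exact absurd ⟨rfl, rfl⟩ hab

lemma hcW_indep (θ : ℕ → ℝ) (n : ℕ)
    (hA : ∀ t, 1 ≤ t → t ≤ n → 1 - θ (t-1) ≠ 0)
    (hB : ∀ t, 1 ≤ t → t ≤ n → 1 - θ (t-1) - θ t ≠ 0)
    (z : Fin n → Bool)
    (hz : ∀ i : Fin n, ¬(hcPrev z i = true ∧ z i = true)) :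
    hcW θ z * (∏ i : Fin n, if z i = true ∧ i.val + 1 < n then hcB θ (i.val+1+1) else 1)
      = (∏ i : Fin n, hcD θ (i.val+1))
        * (∏ i : Fin n, if z i = true then hcNu θ n (i.val+1) else 1)
        * (∏ i : Fin n, if hcPrev z i = true then hcB θ (i.val+1) else 1) := by
  unfold hcW
  rw [← Finset.prod_mul_distrib, ← Finset.prod_mul_distrib, ← Finset.prod_mul_distrib]
  exact Finset.prod_congr rfl fun i _ =>
    hcKer_eq θ n (i.val+1) (by omega) i.isLt hA hB _ _ (fun h => hz i ⟨h.1, h.2⟩)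

lemma shift_prod (θ : ℕ → ℝ) (m : ℕ) (z : Fin (m+1) → Bool) :
    (∏ i : Fin (m+1), if hcPrev z i = true then hcB θ (i.val+1) else 1)
      = ∏ i : Fin (m+1), if z i = true ∧ i.val + 1 < m+1 then hcB θ (i.val+1+1) else 1 := by
  classical
  set y : ℕ → Bool := fun j => if h : j < m+1 then z ⟨j, h⟩ else false with hy
  have hyz : ∀ i : Fin (m+1), y i.val = z i := by
    intro i; rw [hy]; exact dif_pos i.isLt
  set F1 : ℕ → ℝ := fun j => if 0 < j ∧ y (j-1) = true then hcB θ (j+1) else 1 with hF1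
  set F2 : ℕ → ℝ := fun j => if y j = true ∧ j+1 < m+1 then hcB θ (j+1+1) else 1 with hF2
  have e1 : ∀ i : Fin (m+1), (if hcPrev z i = true then hcB θ (i.val+1) else 1) = F1 i.val := by
    intro i
    rw [hF1]
    unfold hcPrev
    by_cases h : i.val = 0
    · rw [dif_pos h]
      simp [h]
    · rw [dif_neg h]
      have hv : y (i.val - 1) = z ⟨i.val - 1, lt_of_le_of_lt (Nat.sub_le _ _) i.isLt⟩ := by
        rw [hy]; exact dif_pos (lt_of_le_of_lt (Nat.sub_le _ _) i.isLt)
      simp only [hv]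
      have : (0 < i.val ∧ z ⟨i.val - 1, lt_of_le_of_lt (Nat.sub_le _ _) i.isLt⟩ = true)
          ↔ (z ⟨i.val - 1, lt_of_le_of_lt (Nat.sub_le _ _) i.isLt⟩ = true) := by
        constructor
        · exact fun h' => h'.2
        · exact fun h' => ⟨by omega, h'⟩
      rw [if_congr this rfl rfl]
  have e2 : ∀ i : Fin (m+1),
      (if z i = true ∧ i.val + 1 < m+1 then hcB θ (i.val+1+1) else 1) = F2 i.val := by
    intro i; simp only [hF2, hyz i]
  rw [Finset.prod_congr rfl (fun i _ => e1 i), Finset.prod_congr rfl (fun i _ => e2 i)]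
  rw [Fin.prod_univ_eq_prod_range F1 (m+1), Fin.prod_univ_eq_prod_range F2 (m+1)]
  rw [Finset.prod_range_succ', Finset.prod_range_succ]
  have hF10 : F1 0 = 1 := by rw [hF1]; simp
  have hF2m : F2 m = 1 := by rw [hF2]; simp
  rw [hF10, hF2m, mul_one, mul_one]
  refine Finset.prod_congr rfl fun j hj => ?_
  rw [Finset.mem_range] at hj
  rw [hF1, hF2]
  simp only [Nat.add_sub_cancel, Nat.zero_lt_succ, true_and]
  have : (j + 1 < m + 1) := by omega
  simp [this]

lemma hcW_char (θ : ℕ → ℝ) (n : ℕ) (hn : 1 ≤ n)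
    (hA : ∀ t, 1 ≤ t → t ≤ n → 1 - θ (t-1) ≠ 0)
    (hB : ∀ t, 1 ≤ t → t ≤ n → 1 - θ (t-1) - θ t ≠ 0)
    (ν : Fin n → ℝ) (hνnu : ∀ k : Fin n, ν k = hcNu θ n (k.val+1))
    (z : Fin n → Bool) :
    hcW θ z = if hcIndep (fun a b : Fin n => a.val + 1 = b.val ∨ b.val + 1 = a.val) z
      then (∏ i : Fin n, hcD θ (i.val+1)) * hcWeight ν z else 0 := by
  by_cases hind : hcIndep (fun a b : Fin n => a.val + 1 = b.val ∨ b.val + 1 = a.val) z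
  · rw [if_pos hind]
    have hz : ∀ i : Fin n, ¬(hcPrev z i = true ∧ z i = true) := by
      rintro i ⟨hp, hi⟩
      unfold hcPrev at hp
      by_cases h : i.val = 0
      · rw [dif_pos h] at hp; exact Bool.false_ne_true hp
      · rw [dif_neg h] at hp
        exact hind ⟨i.val-1, lt_of_le_of_lt (Nat.sub_le _ _) i.isLt⟩ i
          (Or.inl (by simp; omega)) ⟨hp, hi⟩
    obtain ⟨m, rfl⟩ : ∃ m, n = m+1 := ⟨n-1, by omega⟩
    have key := hcW_indep θ (m+1) hA hB z hz
    rw [shift_prod θ m z] at key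
    have hP2 : (∏ i : Fin (m+1), if z i = true ∧ i.val+1 < m+1
        then hcB θ (i.val+1+1) else 1) ≠ 0 := by
      apply Finset.prod_ne_zero_iff.mpr
      intro i _
      by_cases hc : z i = true ∧ i.val+1 < m+1
      · rw [if_pos hc]
        exact div_ne_zero (hA (i.val+2) (by omega) (by omega))
          (hB (i.val+2) (by omega) (by omega))
      · rw [if_neg hc]; exact one_ne_zero
    apply mul_right_cancel₀ hP2
    rw [key]
    have e : hcWeight ν z = ∏ i : Fin (m+1), if z i = true then hcNu θ (m+1) (i.val+1) else 1 :=
      Finset.prod_congr rfl fun i _ => by rw [hνnu i]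
    rw [e]
  · rw [if_neg hind]
    unfold hcIndep at hind
    push_neg at hind
    obtain ⟨i, j, hij, hzi, hzj⟩ := hind
    have hpq : ∃ p q : Fin n, p.val + 1 = q.val ∧ z p = true ∧ z q = true := by
      rcases hij with h | h
      exacts [⟨i, j, h, hzi, hzj⟩, ⟨j, i, h, hzj, hzi⟩]
    obtain ⟨p, q, hpq, hzp, hzq⟩ := hpq
    unfold hcW
    apply Finset.prod_eq_zero (Finset.mem_univ q)
    have hprev : hcPrev z q = true := by
      unfold hcPrev
      have hq0 : ¬(q.val = 0) := by omega
      rw [dif_neg hq0]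
      rw [show (⟨q.val - 1, lt_of_le_of_lt (Nat.sub_le _ _) q.isLt⟩ : Fin n) = p from
        Fin.ext (by simp; omega)]
      exact hzp
    rw [hprev, hzq]
    simp [hcKer]

theorem stmt1 (n : ℕ) (hn : 2 ≤ n) (θ : ℕ → ℝ) (ν : Fin n → ℝ)
    (hθpos : ∀ i, 1 ≤ i → i ≤ n → 0 < θ i)
    (hθ : ∀ i, 1 ≤ i → i + 1 ≤ n → θ i + θ (i + 1) < 1)
    (hν : ∀ k : Fin n, ν k =
      θ (k.val + 1) *
        (∏ j ∈ Finset.Icc (max (k.val + 1) 2) (min (k.val + 2) n - 1), (1 - θ j)) /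
        (∏ j ∈ Finset.Icc (max (k.val + 1) 2) (min (k.val + 2) n),
          (1 - θ (j - 1) - θ j))) :
    ∀ k : Fin n,
      hcMarginal n (fun a b : Fin n => a.val + 1 = b.val ∨ b.val + 1 = a.val) ν k =
        θ (k.val + 1) := by
  intro k
  set θ' : ℕ → ℝ := fun j => if j = 0 then 0 else θ j with hθ'def
  have hθ'eq : ∀ s, 1 ≤ s → θ' s = θ s := fun s hs => if_neg (by omega)
  have h0' : θ' 0 = 0 := if_pos rfl
  have hlt : ∀ s, s ≤ n → θ' s < 1 := by
    intro s hs
    by_cases hs0 : s = 0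
    · rw [hs0, h0']; norm_num
    · rw [hθ'eq s (by omega)]
      by_cases hsn : s < n
      · have h1 := hθ s (by omega) (by omega)
        have h2 := hθpos (s+1) (by omega) (by omega)
        linarith
      · have hsn' : s = n := by omega
        have h1 := hθ (n-1) (by omega) (by omega)
        have h2 := hθpos (n-1) (by omega) (by omega)
        have e : n - 1 + 1 = n := by omega
        rw [e] at h1
        rw [hsn']
        linarith
  have hBpos : ∀ t, 1 ≤ t → t ≤ n → 0 < 1 - θ' (t-1) - θ' t := by
    intro t h1t h2t
    by_cases ht1 : t = 1
    · subst ht1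
      rw [show (1:ℕ) - 1 = 0 from rfl, h0']
      have := hlt 1 h2t
      linarith
    · rw [hθ'eq (t-1) (by omega), hθ'eq t (by omega)]
      have h3 := hθ (t-1) (by omega) (by omega)
      have e : t - 1 + 1 = t := by omega
      rw [e] at h3
      linarith
  have hApos : ∀ t, 1 ≤ t → t ≤ n → 0 < 1 - θ' (t-1) := by
    intro t h1t h2t
    have := hlt (t-1) (by omega)
    linarith
  have hA : ∀ t, 1 ≤ t → t ≤ n → 1 - θ' (t-1) ≠ 0 := fun t a b => ne_of_gt (hApos t a b)
  have hB : ∀ t, 1 ≤ t → t ≤ n → 1 - θ' (t-1) - θ' t ≠ 0 := fun t a b => ne_of_gt (hBpos t a b)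
  have hνnu : ∀ j : Fin n, ν j = hcNu θ' n (j.val+1) := by
    intro j
    rw [hν j]
    rcases lt_trichotomy (j.val + 1) n with hj | hj | hj
    · by_cases hj0 : j.val = 0
      · -- first vertex
        have e1 : max (j.val+1) 2 = 2 := by omega
        have e2 : min (j.val+2) n = 2 := by omega
        rw [e1, e2, show (2:ℕ) - 1 = 1 from rfl,
          show Finset.Icc 2 1 = (∅ : Finset ℕ) from Finset.Icc_eq_empty (by omega),
          Finset.prod_empty, Finset.Icc_self, Finset.prod_singleton]
        simp only [hcNu, hcA, hcB]
        rw [if_pos hj, hj0]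
        norm_num
        rw [h0', hθ'eq 1 (by omega), hθ'eq 2 (by omega)]
        have n1 : (1:ℝ) - θ 1 ≠ 0 := by
          have := hA 2 (by omega) hn
          rwa [show (2:ℕ) - 1 = 1 from rfl, hθ'eq 1 (by omega)] at this
        have n2 : (1:ℝ) - θ 1 - θ 2 ≠ 0 := by
          have := hB 2 (by omega) hn
          rwa [show (2:ℕ) - 1 = 1 from rfl, hθ'eq 1 (by omega), hθ'eq 2 (by omega)] at this
        rw [sub_zero, ← mul_div_assoc, div_mul_cancel₀ _ n1]
      · -- middle vertex
        have e1 : max (j.val+1) 2 = j.val+1 := by omega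
        have e2 : min (j.val+2) n = j.val+2 := by omega
        have e3 : j.val + 2 - 1 = j.val + 1 := by omega
        rw [e1, e2, e3, Finset.Icc_self, Finset.prod_singleton]
        rw [show Finset.Icc (j.val+1) (j.val+2) = Finset.Icc (j.val+1) ((j.val+1)+1) from rfl,
          Finset.prod_Icc_succ_top (by omega), Finset.Icc_self, Finset.prod_singleton]
        simp only [hcNu, hcA, hcB]
        rw [if_pos hj]
        simp only [Nat.add_sub_cancel]
        rw [hθ'eq j.val (by omega), hθ'eq (j.val+1) (by omega), hθ'eq (j.val+1+1) (by omega)]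
        have n1 : (1:ℝ) - θ (j.val) - θ (j.val+1) ≠ 0 := by
          have := hB (j.val+1) (by omega) (by omega)
          rwa [Nat.add_sub_cancel, hθ'eq j.val (by omega), hθ'eq (j.val+1) (by omega)] at this
        have n2 : (1:ℝ) - θ (j.val+1) - θ (j.val+1+1) ≠ 0 := by
          have := hB (j.val+1+1) (by omega) (by omega)
          rwa [Nat.add_sub_cancel, hθ'eq (j.val+1) (by omega), hθ'eq (j.val+1+1) (by omega)] at this
        field_simp
    · -- last vertex
      have e1 : max (j.val+1) 2 = j.val+1 := by omega
      have e2 : min (j.val+2) n = n := by omega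
      rw [e1, e2,
        show Finset.Icc (j.val+1) (n-1) = (∅ : Finset ℕ) from Finset.Icc_eq_empty (by omega),
        Finset.prod_empty]
      rw [show Finset.Icc (j.val+1) n = {j.val+1} from Finset.Icc_eq_singleton_iff.mpr ⟨rfl, hj.symm⟩,
        Finset.prod_singleton]
      simp only [hcNu, hcA]
      rw [if_neg (show ¬(j.val+1 < n) by omega), mul_one, mul_one, Nat.add_sub_cancel,
        hθ'eq j.val (by omega), hθ'eq (j.val+1) (by omega)]
    · exact absurd j.isLt (by omega)
  have hKc : (∏ i : Fin n, hcD θ' (i.val+1)) ≠ 0 := by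
    apply Finset.prod_ne_zero_iff.mpr
    intro i _
    unfold hcD
    exact div_ne_zero (hB (i.val+1) (by omega) i.isLt) (hA (i.val+1) (by omega) i.isLt)
  have char := hcW_char θ' n (by omega) hA hB ν hνnu
  have hZ : (∏ i : Fin n, hcD θ' (i.val+1))
      * hcZ n (fun a b : Fin n => a.val + 1 = b.val ∨ b.val + 1 = a.val) ν = 1 := by
    unfold hcZ
    rw [Finset.mul_sum]
    have pt : ∀ z : Fin n → Bool, (∏ i : Fin n, hcD θ' (i.val+1))
        * (if hcIndep (fun a b : Fin n => a.val + 1 = b.val ∨ b.val + 1 = a.val) z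
            then hcWeight ν z else 0) = hcW θ' z := by
      intro z
      rw [char z]
      by_cases h : hcIndep (fun a b : Fin n => a.val + 1 = b.val ∨ b.val + 1 = a.val) z
      · rw [if_pos h, if_pos h]
      · rw [if_neg h, if_neg h, mul_zero]
    rw [Finset.sum_congr rfl (fun z _ => pt z)]
    exact sum_total θ' n h0' hlt n (by omega) le_rfl
  have hN : (∏ i : Fin n, hcD θ' (i.val+1))
      * (∑ z : Fin n → Bool,
          if hcIndep (fun a b : Fin n => a.val + 1 = b.val ∨ b.val + 1 = a.val) z ∧ z k = true
            then hcWeight ν z else 0) = θ' (k.val+1) := by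
    rw [Finset.mul_sum]
    have pt : ∀ z : Fin n → Bool, (∏ i : Fin n, hcD θ' (i.val+1))
        * (if hcIndep (fun a b : Fin n => a.val + 1 = b.val ∨ b.val + 1 = a.val) z ∧ z k = true
            then hcWeight ν z else 0)
          = (if z ⟨k.val, k.isLt⟩ = true then hcW θ' z else 0) := by
      intro z
      have ek : (⟨k.val, k.isLt⟩ : Fin n) = k := rfl
      rw [ek]
      by_cases hzk : z k = true
      · rw [char z]
        by_cases h : hcIndep (fun a b : Fin n => a.val + 1 = b.val ∨ b.val + 1 = a.val) z
        · rw [if_pos ⟨h, hzk⟩, if_pos hzk, if_pos h]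
        · rw [if_neg (fun hh => h hh.1), if_pos hzk, if_neg h, mul_zero]
      · rw [if_neg (fun hh => hzk hh.2), if_neg hzk, mul_zero]
    rw [Finset.sum_congr rfl (fun z _ => pt z)]
    exact sum_marg θ' n h0' hlt k.val n (by omega) k.isLt le_rfl
  unfold hcMarginal
  rw [← mul_div_mul_left _ _ hKc, hN, hZ, div_one, hθ'eq (k.val+1) (by omega)]
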